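/- For any MIO coherence monotone C and any state ρ with maximally coherent mixed state ρ_max (same spectrum, diagonal in a mutually unbiased basis), the supremum of C over all unital channels applied to ρ equals C(ρ_max): sup_{Λ unital} C(Λ(ρ)) = C(ρ_max). -/

import Mathlib

open Matrix BigOperators
open scoped ComplexOrder

noncomputable section

/-- A density matrix: positive semidefinite with unit trace. -/
def IsDensity {n : Type*} [Fintype n] (ρ : Matrix n n ℂ) : Prop :=
  ρ.PosSemidef ∧ ρ.trace = 1

/-- A quantum channel (CPTP map), given via a Kraus representation. -/
def IsChannel {m n : Type*} [Fintype m] [Fintype n] [DecidableEq m]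
    (Λ : Matrix m m ℂ → Matrix n n ℂ) : Prop :=
  ∃ (k : ℕ) (K : Fin k → Matrix n m ℂ),
    (∑ i, (K i)ᴴ * K i) = 1 ∧ ∀ ρ, Λ ρ = ∑ i, K i * ρ * (K i)ᴴ

/-- A maximally incoherent operation: maps every incoherent (diagonal) state to an
incoherent state.  The incoherent basis is fixed to be the standard basis. -/
def IsMIO {n : Type*} [Fintype n] (Λ : Matrix n n ℂ → Matrix n n ℂ) : Prop :=
  ∀ σ, IsDensity σ → σ.IsDiag → (Λ σ).IsDiag

namespace Stmt15Aux

variable {d : ℕ}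

lemma vecMulVec_conjT (u : Fin d → ℂ) :
    (vecMulVec u (star u))ᴴ = vecMulVec u (star u) := by
  ext i j
  simp [vecMulVec_apply, conjTranspose_apply, mul_comm]

lemma sandwich (u : Fin d → ℂ) (X : Matrix (Fin d) (Fin d) ℂ) :
    vecMulVec u (star u) * X * vecMulVec u (star u)
      = (star u ⬝ᵥ X *ᵥ u) • vecMulVec u (star u) := by
  ext i j
  simp only [mul_apply, vecMulVec_apply, Matrix.smul_apply, smul_eq_mul, dotProduct, mulVec,
    Pi.star_apply, Finset.sum_mul, Finset.mul_sum]
  rw [Finset.sum_comm]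
  refine Finset.sum_congr rfl fun a _ => Finset.sum_congr rfl fun c _ => by ring

lemma vmv_mul (u v w x : Fin d → ℂ) :
    vecMulVec u v * vecMulVec w x = (v ⬝ᵥ w) • vecMulVec u x := by
  ext i j
  simp only [mul_apply, vecMulVec_apply, Matrix.smul_apply, smul_eq_mul, dotProduct,
    Finset.sum_mul]
  refine Finset.sum_congr rfl fun a _ => by ring

lemma completeness (b : Fin d → Fin d → ℂ)
    (hortho : ∀ n m, star (b n) ⬝ᵥ b m = if n = m then 1 else 0) :
    ∑ n, vecMulVec (b n) (star (b n)) = 1 := by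
  have hB : (Matrix.of fun n => star (b n)) * (Matrix.of fun n => star (b n))ᴴ = 1 := by
    ext n m
    have h := hortho n m
    simp only [dotProduct, Pi.star_apply] at h
    simpa [mul_apply, conjTranspose_apply, of_apply, Matrix.one_apply, Pi.star_apply,
      star_star] using h
  have h2 := mul_eq_one_comm.mp hB
  ext i j
  have h3 := congrFun (congrFun h2 i) j
  simp only [mul_apply, conjTranspose_apply, of_apply, Pi.star_apply, star_star,
    Matrix.one_apply] at h3
  simpa [Matrix.sum_apply, vecMulVec_apply, Pi.star_apply, Complex.star_def,
    Matrix.one_apply] using h3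

end Stmt15Aux

open Stmt15Aux in
/-- for any MIO coherence monotone `C` and any state `ρ` with maximally
coherent mixed state `ρ_max` (same spectrum, diagonal in a mutually unbiased basis), the
supremum of `C` over all unital channels applied to `ρ` equals `C(ρ_max)`. -/
theorem sup_unital_coherence_eq_mcms (d : ℕ) (hd : 0 < d)
    (b : Fin d → Fin d → ℂ)
    (hortho : ∀ n m, star (b n) ⬝ᵥ b m = if n = m then 1 else 0)
    (hmub : ∀ i n, ‖b n i‖ ^ 2 = (d : ℝ)⁻¹)
    (p : Fin d → ℝ) (hp0 : ∀ n, 0 ≤ p n) (hp1 : ∑ n, p n = 1)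
    (ρmax : Matrix (Fin d) (Fin d) ℂ)
    (hρmax : ρmax = ∑ n, (p n : ℂ) • vecMulVec (b n) (star (b n)))
    (ρ : Matrix (Fin d) (Fin d) ℂ) (hρ : IsDensity ρ)
    (hrel : ∃ V ∈ Matrix.unitaryGroup (Fin d) ℂ, ρ = V * ρmax * Vᴴ)
    (C : Matrix (Fin d) (Fin d) ℂ → ℝ)
    (hC0 : ∀ τ, 0 ≤ C τ)
    (hCmono : ∀ Λ, IsChannel Λ → IsMIO Λ → ∀ τ, IsDensity τ → C (Λ τ) ≤ C τ) :
    sSup {x | ∃ Λ : Matrix (Fin d) (Fin d) ℂ → Matrix (Fin d) (Fin d) ℂ,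
        IsChannel Λ ∧ Λ 1 = 1 ∧ x = C (Λ ρ)} = C ρmax := by
  obtain ⟨V, hV, hρV⟩ := hrel
  have hVV' : V * Vᴴ = 1 := by
    have := Matrix.mem_unitaryGroup_iff.mp hV
    simpa [Matrix.star_eq_conjTranspose] using this
  have hV'V : Vᴴ * V = 1 := by
    have := Matrix.mem_unitaryGroup_iff'.mp hV
    simpa [Matrix.star_eq_conjTranspose] using this
  set P : Fin d → Matrix (Fin d) (Fin d) ℂ := fun n => vecMulVec (b n) (star (b n)) with hP
  have hPsum : ∑ n, P n = 1 := completeness b hortho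
  have hPH : ∀ n, (P n)ᴴ = P n := fun n => vecMulVec_conjT (b n)
  have hPmulP : ∀ n m, P n * P m
      = (if n = m then (1 : ℂ) else 0) • vecMulVec (b n) (star (b m)) := by
    intro n m
    rw [hP]
    simp only
    rw [vmv_mul, hortho]
  have hPP : ∀ n, P n * P n = P n := by
    intro n
    rw [hPmulP n n, if_pos rfl, one_smul, hP]
  -- ⟨b n| ρmax |b n⟩ = p n
  have hPρmax : ∀ n, P n * ρmax * P n = (p n : ℂ) • P n := by
    intro n
    rw [hρmax, Finset.mul_sum, Finset.sum_mul]
    have hterm : ∀ m, P n * ((p m : ℂ) • P m) * P n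
        = if n = m then (p m : ℂ) • P n else 0 := by
      intro m
      rw [Matrix.mul_smul, Matrix.smul_mul]
      by_cases h : n = m
      · subst h
        rw [if_pos rfl, hPP n, hPP n]
      · have h0 : P n * P m = 0 := by rw [hPmulP, if_neg h, zero_smul]
        rw [h0, Matrix.zero_mul, smul_zero, if_neg h]
    rw [Finset.sum_congr rfl fun m _ => hterm m, Finset.sum_ite_eq]
    simp
  -- dephasing of a diagonal density in the b basis
  have hPσ : ∀ σ : Matrix (Fin d) (Fin d) ℂ, IsDensity σ → σ.IsDiag →
      ∀ n, P n * σ * P n = ((d : ℂ))⁻¹ • P n := by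
    intro σ hσ hσdiag n
    rw [hP]
    simp only
    rw [sandwich (b n) σ]
    congr 1
    have h1 : star (b n) ⬝ᵥ σ *ᵥ b n = ∑ i, star (b n i) * (σ i i * b n i) := by
      simp only [dotProduct, mulVec, Pi.star_apply]
      refine Finset.sum_congr rfl fun i _ => ?_
      congr 1
      rw [Finset.sum_eq_single i (fun j _ hji => by rw [hσdiag (Ne.symm hji), zero_mul])
        (fun h => absurd (Finset.mem_univ i) h)]
    rw [h1]
    have h2 : ∀ i, star (b n i) * (σ i i * b n i) = ((d : ℂ))⁻¹ * σ i i := by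
      intro i
      have habs : (starRingEnd ℂ) (b n i) * b n i = ((d : ℝ)⁻¹ : ℂ) := by
        rw [mul_comm, Complex.mul_conj, ← Complex.sq_norm, hmub i n]
        exact Complex.ofReal_inv _
      calc star (b n i) * (σ i i * b n i)
          = ((starRingEnd ℂ) (b n i) * b n i) * σ i i := by
            simp only [Complex.star_def]; ring
        _ = ((d : ℂ))⁻¹ * σ i i := by rw [habs]; push_cast; ring
    rw [Finset.sum_congr rfl fun i _ => h2 i, ← Finset.mul_sum]
    have htr : ∑ i, σ i i = 1 := by
      simpa [Matrix.trace, Matrix.diag] using hσ.2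
    rw [htr, mul_one]
  -- ρmax = Vᴴ ρ V
  have hback : ρmax = Vᴴ * ρ * V := by
    rw [hρV]
    have h : Vᴴ * (V * ρmax * Vᴴ) * V = (Vᴴ * V) * ρmax * (Vᴴ * V) := by
      simp only [Matrix.mul_assoc]
    rw [h, hV'V, Matrix.one_mul, Matrix.mul_one]
  -- density of ρmax
  have hρmaxd : IsDensity ρmax := by
    constructor
    · rw [hback]
      exact hρ.1.conjTranspose_mul_mul_same V
    · rw [hback, Matrix.trace_mul_cycle, hVV', Matrix.one_mul, hρ.2]
  -- membership : C ρmax ∈ S via X ↦ Vᴴ X V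
  have hmem : C ρmax ∈ {x | ∃ Λ : Matrix (Fin d) (Fin d) ℂ → Matrix (Fin d) (Fin d) ℂ,
      IsChannel Λ ∧ Λ 1 = 1 ∧ x = C (Λ ρ)} := by
    refine ⟨fun X => Vᴴ * X * V, ⟨1, fun _ => Vᴴ, ?_, ?_⟩, ?_, ?_⟩
    · simp [hVV']
    · intro τ; simp
    · show Vᴴ * 1 * V = 1
      rw [Matrix.mul_one, hV'V]
    · show C ρmax = C (Vᴴ * ρ * V)
      exact congrArg C hback
  -- upper bound
  have hub : ∀ x ∈ {x | ∃ Λ : Matrix (Fin d) (Fin d) ℂ → Matrix (Fin d) (Fin d) ℂ,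
      IsChannel Λ ∧ Λ 1 = 1 ∧ x = C (Λ ρ)}, x ≤ C ρmax := by
    rintro x ⟨Λ, ⟨k, K, hK1, hKrep⟩, hΛ1, rfl⟩
    set L : Fin k × Fin d → Matrix (Fin d) (Fin d) ℂ := fun q => K q.1 * V * P q.2 with hL
    set Φ : Matrix (Fin d) (Fin d) ℂ → Matrix (Fin d) (Fin d) ℂ :=
      fun X => ∑ q : Fin k × Fin d, L q * X * (L q)ᴴ with hΦ
    have hLH : ∀ q : Fin k × Fin d, (L q)ᴴ = P q.2 * Vᴴ * (K q.1)ᴴ := by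
      intro q
      rw [hL]
      simp only [conjTranspose_mul, hPH, Matrix.mul_assoc]
    -- trace preservation
    have hΦtp : ∑ q : Fin k × Fin d, (L q)ᴴ * L q = 1 := by
      have hterm : ∀ q : Fin k × Fin d,
          (L q)ᴴ * L q = (P q.2 * Vᴴ) * ((K q.1)ᴴ * K q.1) * (V * P q.2) := by
        intro q
        rw [hLH, hL]
        simp only [Matrix.mul_assoc]
      rw [Finset.sum_congr rfl fun q _ => hterm q, Fintype.sum_prod_type_right]
      have hinner : ∀ n : Fin d,
          (∑ i : Fin k, (P n * Vᴴ) * ((K i)ᴴ * K i) * (V * P n)) = P n := by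
        intro n
        rw [← Finset.sum_mul, ← Finset.mul_sum, hK1, Matrix.mul_one]
        have h : (P n * Vᴴ) * (V * P n) = P n * (Vᴴ * V) * P n := by
          simp only [Matrix.mul_assoc]
        rw [h, hV'V, Matrix.mul_one, hPP]
      rw [Finset.sum_congr rfl fun n _ => hinner n, hPsum]
    have hΦchan : IsChannel Φ := by
      refine ⟨k * d, fun j => L (finProdFinEquiv.symm j), ?_, ?_⟩
      · exact (Equiv.sum_comp finProdFinEquiv.symm fun q => (L q)ᴴ * L q).trans hΦtp
      · intro τ
        show (∑ q : Fin k × Fin d, L q * τ * (L q)ᴴ) = _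
        exact (Equiv.sum_comp finProdFinEquiv.symm fun q => L q * τ * (L q)ᴴ).symm
    -- key conjugation computation
    have hΦeval : ∀ (X : Matrix (Fin d) (Fin d) ℂ) (c : Fin d → ℂ),
        (∀ n, P n * X * P n = c n • P n) →
        Φ X = ∑ i : Fin k, K i * (V * (∑ n, c n • P n) * Vᴴ) * (K i)ᴴ := by
      intro X c hc
      show (∑ q : Fin k × Fin d, L q * X * (L q)ᴴ) = _
      rw [Fintype.sum_prod_type]
      refine Finset.sum_congr rfl fun i _ => ?_
      have hterm : ∀ n : Fin d, L (i, n) * X * (L (i, n))ᴴ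
          = K i * (V * (c n • P n) * Vᴴ) * (K i)ᴴ := by
        intro n
        rw [hLH, hL]
        simp only
        have h : K i * V * P n * X * (P n * Vᴴ * (K i)ᴴ)
            = K i * (V * (P n * X * P n) * Vᴴ) * (K i)ᴴ := by
          simp only [Matrix.mul_assoc]
        rw [h, hc n]
      rw [Finset.sum_congr rfl fun n _ => hterm n]
      have h : K i * (V * (∑ n, c n • P n) * Vᴴ) * (K i)ᴴ
          = ∑ n, K i * (V * (c n • P n) * Vᴴ) * (K i)ᴴ := by
        simp only [Finset.mul_sum, Finset.sum_mul]
      rw [h]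
    -- Φ is MIO
    have hΦmio : IsMIO Φ := by
      intro σ hσ hσdiag
      have h1 : Φ σ = ∑ i : Fin k, K i * (V * (∑ n, ((d : ℂ))⁻¹ • P n) * Vᴴ) * (K i)ᴴ :=
        hΦeval σ _ (hPσ σ hσ hσdiag)
      have h2 : (∑ n, ((d : ℂ))⁻¹ • P n) = ((d : ℂ))⁻¹ • (1 : Matrix (Fin d) (Fin d) ℂ) := by
        rw [← Finset.smul_sum, hPsum]
      have hmid : V * (((d : ℂ))⁻¹ • (1 : Matrix (Fin d) (Fin d) ℂ)) * Vᴴ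
          = ((d : ℂ))⁻¹ • (1 : Matrix (Fin d) (Fin d) ℂ) := by
        rw [Matrix.mul_smul, Matrix.smul_mul, Matrix.mul_one, hVV']
      have hterm : ∀ i : Fin k,
          K i * (((d : ℂ))⁻¹ • (1 : Matrix (Fin d) (Fin d) ℂ)) * (K i)ᴴ
            = ((d : ℂ))⁻¹ • (K i * 1 * (K i)ᴴ) := by
        intro i
        rw [Matrix.mul_smul, Matrix.smul_mul]
      have h3 : Φ σ = ((d : ℂ))⁻¹ • (1 : Matrix (Fin d) (Fin d) ℂ) := by
        rw [h1, h2]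
        simp only [hmid]
        rw [Finset.sum_congr rfl fun i _ => hterm i, ← Finset.smul_sum, ← hKrep 1, hΛ1]
      rw [h3]
      intro i j hij
      simp [Matrix.smul_apply, Matrix.one_apply, hij]
    -- Φ ρmax = Λ ρ
    have hΦρmax : Φ ρmax = Λ ρ := by
      have h1 : Φ ρmax = ∑ i : Fin k, K i * (V * (∑ n, (p n : ℂ) • P n) * Vᴴ) * (K i)ᴴ :=
        hΦeval ρmax _ hPρmax
      rw [h1, ← hρmax, ← hρV, hKrep]
    calc C (Λ ρ) = C (Φ ρmax) := by rw [hΦρmax]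
      _ ≤ C ρmax := hCmono Φ hΦchan hΦmio ρmax hρmaxd
  exact le_antisymm (csSup_le ⟨_, hmem⟩ hub) (le_csSup ⟨_, hub⟩ hmem)
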